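/- Let λ < λ̂ and m > 0 be a positive integer. Define R_i = Pr[m + Poisson(λ) = i] / Pr[Poisson(λ̂) = i] for i ≥ m. Then R_i / R_{i+1} = λ̂(i+1−m) / (λ(i+1)), and consequently R_i is increasing for i ≤ m/(1−λ/λ̂) − 1 and decreasing for larger i; hence the pmfs of m + Poisson(λ) and Poisson(λ̂) intersect at most twice. -/
import Mathlib


/-- The pmf of `m + Poisson(lam)`. -/
noncomputable def shiftedPoissonPMF (lam : ℝ) (m : ℕ) (i : ℕ) : ℝ :=
  if m ≤ i then Real.exp (-lam) * lam ^ (i - m) / (i - m).factorial else 0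

/-- The likelihood ratio `R i = Pr[m + Poisson(λ) = i] / Pr[Poisson(λ̂) = i]`. -/
noncomputable def poissonRatio (lam lamh : ℝ) (m : ℕ) (i : ℕ) : ℝ :=
  shiftedPoissonPMF lam m i / shiftedPoissonPMF lamh 0 i

lemma pmf_pos {lam : ℝ} (hlam : 0 < lam) {m i : ℕ} (h : m ≤ i) :
    0 < shiftedPoissonPMF lam m i := by
  unfold shiftedPoissonPMF
  rw [if_pos h]
  positivity

lemma ratio_pos {lam lamh : ℝ} (hlam : 0 < lam) (hlamh : 0 < lamh) {m i : ℕ} (h : m ≤ i) :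
    0 < poissonRatio lam lamh m i :=
  div_pos (pmf_pos hlam h) (pmf_pos hlamh (Nat.zero_le _))

lemma key (lam lamh : ℝ) (hlam : 0 < lam) (hlamh : 0 < lamh) (m i : ℕ) (hmi : m ≤ i) :
    poissonRatio lam lamh m (i+1) * (lamh * ((i:ℝ)+1-m)) =
    poissonRatio lam lamh m i * (lam * ((i:ℝ)+1)) := by
  have h1 : m ≤ i + 1 := Nat.le_succ_of_le hmi
  unfold poissonRatio shiftedPoissonPMF
  rw [if_pos hmi, if_pos h1, if_pos (Nat.zero_le _), if_pos (Nat.zero_le _)]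
  have e1 : i + 1 - m = (i - m) + 1 := by omega
  have hc : ((i - m : ℕ) : ℝ) = (i:ℝ) - m := by
    push_cast [hmi]; ring
  rw [e1]
  simp only [Nat.sub_zero, Nat.factorial_succ, pow_succ]
  push_cast
  rw [hc]
  have hf1 : ((i - m).factorial : ℝ) ≠ 0 := by positivity
  have hf2 : (i.factorial : ℝ) ≠ 0 := by positivity
  have he1 : Real.exp (-lam) ≠ 0 := Real.exp_ne_zero _
  have he2 : Real.exp (-lamh) ≠ 0 := Real.exp_ne_zero _
  have hmr : (m:ℝ) ≤ i := by exact_mod_cast hmi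
  have h3 : (i:ℝ) - m + 1 ≠ 0 := by linarith
  have h4 : (i:ℝ) + 1 ≠ 0 := by positivity
  field_simp
  ring

lemma cond_iff (lam lamh : ℝ) (hlam : 0 < lam) (hlt : lam < lamh) (m i : ℕ) :
    ((i : ℝ) ≤ (m : ℝ) / (1 - lam / lamh) - 1) ↔
      lamh * ((i:ℝ) + 1 - m) ≤ lam * ((i:ℝ) + 1) := by
  have hlamh : (0:ℝ) < lamh := lt_trans hlam hlt
  have hc : (0:ℝ) < 1 - lam / lamh := by
    rw [sub_pos, div_lt_one hlamh]; exact hlt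
  have key2 : ∀ x : ℝ, x * (1 - lam / lamh) * lamh = x * (lamh - lam) := by
    intro x; field_simp
  constructor
  · intro h
    have h1 : ((i:ℝ)+1) * (1 - lam / lamh) ≤ m := (le_div_iff₀ hc).mp (by linarith)
    have h2 := mul_le_mul_of_nonneg_right h1 hlamh.le
    rw [key2] at h2
    nlinarith
  · intro h
    have h1 : ((i:ℝ)+1) * (1 - lam / lamh) * lamh ≤ (m:ℝ) * lamh := by
      rw [key2]; nlinarith
    have h2 : ((i:ℝ)+1) * (1 - lam / lamh) ≤ m := le_of_mul_le_mul_right h1 hlamh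
    linarith [(le_div_iff₀ hc).mpr h2]

lemma cond_iff' (lam lamh : ℝ) (hlam : 0 < lam) (hlt : lam < lamh) (m i : ℕ) :
    ((m : ℝ) / (1 - lam / lamh) - 1 ≤ (i : ℝ)) ↔
      lam * ((i:ℝ) + 1) ≤ lamh * ((i:ℝ) + 1 - m) := by
  have hlamh : (0:ℝ) < lamh := lt_trans hlam hlt
  have hc : (0:ℝ) < 1 - lam / lamh := by
    rw [sub_pos, div_lt_one hlamh]; exact hlt
  have key2 : ∀ x : ℝ, x * (1 - lam / lamh) * lamh = x * (lamh - lam) := by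
    intro x; field_simp
  constructor
  · intro h
    have h1 : (m:ℝ) ≤ ((i:ℝ)+1) * (1 - lam / lamh) := (div_le_iff₀ hc).mp (by linarith)
    have h2 := mul_le_mul_of_nonneg_right h1 hlamh.le
    rw [key2] at h2
    nlinarith
  · intro h
    have h1 : (m:ℝ) * lamh ≤ ((i:ℝ)+1) * (1 - lam / lamh) * lamh := by
      rw [key2]; nlinarith
    have h2 : (m:ℝ) ≤ ((i:ℝ)+1) * (1 - lam / lamh) := le_of_mul_le_mul_right h1 hlamh
    linarith [(div_le_iff₀ hc).mpr h2]

lemma step_up {lam lamh : ℝ} (hlam : 0 < lam) (hlt : lam < lamh) {m i : ℕ} (hmi : m ≤ i)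
    (h : (i : ℝ) ≤ (m : ℝ) / (1 - lam / lamh) - 1) :
    poissonRatio lam lamh m i ≤ poissonRatio lam lamh m (i + 1) := by
  have hlamh : (0:ℝ) < lamh := lt_trans hlam hlt
  have hk := key lam lamh hlam hlamh m i hmi
  have hQ := ratio_pos hlam hlamh (Nat.le_succ_of_le hmi)
  have hb : (0:ℝ) < lam * ((i:ℝ) + 1) := by positivity
  have hab := (cond_iff lam lamh hlam hlt m i).mp h
  have h2 : poissonRatio lam lamh m i * (lam * ((i:ℝ)+1)) ≤
      poissonRatio lam lamh m (i+1) * (lam * ((i:ℝ)+1)) := by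
    rw [← hk]
    exact mul_le_mul_of_nonneg_left hab hQ.le
  exact le_of_mul_le_mul_right h2 hb

lemma step_down {lam lamh : ℝ} (hlam : 0 < lam) (hlt : lam < lamh) {m i : ℕ} (hmi : m ≤ i)
    (h : (m : ℝ) / (1 - lam / lamh) - 1 ≤ (i : ℝ)) :
    poissonRatio lam lamh m (i + 1) ≤ poissonRatio lam lamh m i := by
  have hlamh : (0:ℝ) < lamh := lt_trans hlam hlt
  have hk := key lam lamh hlam hlamh m i hmi
  have hQ := ratio_pos hlam hlamh (Nat.le_succ_of_le hmi)
  have hb : (0:ℝ) < lam * ((i:ℝ) + 1) := by positivity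
  have hab := (cond_iff' lam lamh hlam hlt m i).mp h
  have h2 : poissonRatio lam lamh m (i+1) * (lam * ((i:ℝ)+1)) ≤
      poissonRatio lam lamh m i * (lam * ((i:ℝ)+1)) := by
    rw [← hk]
    exact mul_le_mul_of_nonneg_left hab hQ.le
  exact le_of_mul_le_mul_right h2 hb

lemma mono_up {lam lamh : ℝ} (hlam : 0 < lam) (hlt : lam < lamh) {m : ℕ} :
    ∀ b a : ℕ, m ≤ a → a ≤ b → (b : ℝ) ≤ (m : ℝ) / (1 - lam / lamh) - 1 →
      poissonRatio lam lamh m a ≤ poissonRatio lam lamh m b := by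
  intro b
  induction b with
  | zero => intro a hma hab _; interval_cases a; exact le_refl _
  | succ c ih =>
    intro a hma hab hbt
    rcases Nat.eq_or_lt_of_le hab with h | h
    · rw [h]
    · have hac : a ≤ c := Nat.lt_succ_iff.mp h
      have hct : (c : ℝ) ≤ (m : ℝ) / (1 - lam / lamh) - 1 := by
        push_cast at hbt ⊢; linarith
      exact le_trans (ih a hma hac hct) (step_up hlam hlt (le_trans hma hac) hct)

lemma mono_down {lam lamh : ℝ} (hlam : 0 < lam) (hlt : lam < lamh) {m : ℕ} :
    ∀ b a : ℕ, m ≤ a → a ≤ b → (m : ℝ) / (1 - lam / lamh) - 1 ≤ (a : ℝ) →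
      poissonRatio lam lamh m b ≤ poissonRatio lam lamh m a := by
  intro b
  induction b with
  | zero => intro a hma hab _; interval_cases a; exact le_refl _
  | succ c ih =>
    intro a hma hab hat
    rcases Nat.eq_or_lt_of_le hab with h | h
    · rw [h]
    · have hac : a ≤ c := Nat.lt_succ_iff.mp h
      have hct : (m : ℝ) / (1 - lam / lamh) - 1 ≤ (c : ℝ) := by
        have : (a:ℝ) ≤ c := by exact_mod_cast hac
        linarith
      exact le_trans (step_down hlam hlt (le_trans hma hac) hct) (ih a hma hac hat)

/-- For `λ < λ̂` and `m > 0`: the ratio `R_i / R_{i+1}` equals `λ̂(i+1−m)/(λ(i+1))` for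
`i ≥ m`; consequently `R` is increasing for `i ≤ m/(1−λ/λ̂) − 1` and decreasing for larger
`i`, and the pmfs of `m + Poisson(λ)` and `Poisson(λ̂)` intersect at most twice (the set
where the first pmf exceeds the second is an interval). -/
theorem stmt6 (lam lamh : ℝ) (hlam : 0 < lam) (hlt : lam < lamh) (m : ℕ) (hm : 0 < m) :
    (∀ i : ℕ, m ≤ i →
      poissonRatio lam lamh m i / poissonRatio lam lamh m (i + 1) =
        lamh * ((i : ℝ) + 1 - m) / (lam * ((i : ℝ) + 1))) ∧
    (∀ i : ℕ, m ≤ i →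
      (((i : ℝ) ≤ (m : ℝ) / (1 - lam / lamh) - 1 →
          poissonRatio lam lamh m i ≤ poissonRatio lam lamh m (i + 1)) ∧
       ((m : ℝ) / (1 - lam / lamh) - 1 ≤ (i : ℝ) →
          poissonRatio lam lamh m (i + 1) ≤ poissonRatio lam lamh m i))) ∧
    (∀ i j k : ℕ, i ≤ j → j ≤ k →
      shiftedPoissonPMF lamh 0 i < shiftedPoissonPMF lam m i →
      shiftedPoissonPMF lamh 0 k < shiftedPoissonPMF lam m k →
      shiftedPoissonPMF lamh 0 j ≤ shiftedPoissonPMF lam m j) := by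
  have hlamh : (0:ℝ) < lamh := lt_trans hlam hlt
  refine ⟨?_, ?_, ?_⟩
  · intro i hmi
    have hk := key lam lamh hlam hlamh m i hmi
    have hQ := (ratio_pos hlam hlamh (Nat.le_succ_of_le hmi)).ne'
    have hb : lam * ((i:ℝ) + 1) ≠ 0 := by positivity
    rw [div_eq_div_iff hQ hb]
    linarith [hk]
  · intro i hmi
    exact ⟨fun h => step_up hlam hlt hmi h, fun h => step_down hlam hlt hmi h⟩
  · intro i j k hij hjk hi hk
    -- i ≥ m
    have hmi : m ≤ i := by
      by_contra hc
      rw [show shiftedPoissonPMF lam m i = 0 from if_neg hc] at hi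
      exact absurd hi (not_lt.mpr (pmf_pos hlamh (Nat.zero_le _)).le)
    have hmj : m ≤ j := le_trans hmi hij
    have hmk : m ≤ k := le_trans hmj hjk
    have hRi : 1 < poissonRatio lam lamh m i :=
      (one_lt_div (pmf_pos hlamh (Nat.zero_le _))).mpr hi
    have hRk : 1 < poissonRatio lam lamh m k :=
      (one_lt_div (pmf_pos hlamh (Nat.zero_le _))).mpr hk
    have hRj : 1 ≤ poissonRatio lam lamh m j := by
      rcases le_total ((j : ℝ)) ((m : ℝ) / (1 - lam / lamh) - 1) with h | h
      · exact le_trans hRi.le (mono_up hlam hlt j i hmi hij h)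
      · exact le_trans hRk.le (mono_down hlam hlt k j hmj hjk h)
    have := (one_le_div (pmf_pos hlamh (Nat.zero_le _) :
        0 < shiftedPoissonPMF lamh 0 j)).mp hRj
    exact this
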